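/- If G is an n-vertex graph with χ(G) = k and n ≤ Ck for some C ≥ 1, then the expected chromatic number of the random subgraph G_{1/2} is at least k/(8C log k). -/

import Mathlib

open Finset SimpleGraph

attribute [local instance] Classical.propDecidable

/-- The expectation of `f` of a uniformly random spanning subgraph of `G`
(each edge kept independently with probability `1/2`). -/
noncomputable def exHalf {V : Type*} [Fintype V] (G : SimpleGraph V)
    (f : SimpleGraph V → ℕ) : ℝ :=
  (∑ S ∈ G.edgeFinset.powerset,
      (f (SimpleGraph.fromEdgeSet (S : Set (Sym2 V))) : ℝ)) /
    2 ^ G.edgeFinset.card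

/-- If `G` is an `n`-vertex graph with `χ(G) = k` and `n ≤ Ck` for some `C ≥ 1`
(with `k` large enough that `d = k/(4C log k) ≥ 1`, `log` base 2), then the
expected chromatic number of the random subgraph `G_{1/2}` is at least
`k/(8C log k)`. -/
lemma choose_two_le_card_edges {V : Type*} [Fintype V] (H : SimpleGraph V) [Fintype H.edgeSet] :
    (H.chromaticNumber.toNat).choose 2 ≤ H.edgeFinset.card := by
  classical
  set c := H.chromaticNumber.toNat with hc
  rcases le_or_gt c 1 with h1 | h1
  · have : c.choose 2 = 0 := Nat.choose_eq_zero_of_lt (by omega)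
    simp [this]
  -- c ≥ 2
  obtain ⟨Co⟩ := H.colorable_chromaticNumber_of_fintype
  have hne_top : H.chromaticNumber ≠ ⊤ :=
    chromaticNumber_ne_top_iff_exists.2 ⟨_, H.colorable_of_fintype⟩
  have hχ : H.chromaticNumber = (c : ℕ∞) := (ENat.coe_toNat hne_top).symm
  have claim : ∀ z : Sym2 (Fin c), ¬ z.IsDiag → ∃ e ∈ H.edgeFinset, e.map Co = z := by
    intro z
    refine Sym2.ind (fun i j hnd => ?_) z
    have hij : i ≠ j := by
      intro h; exact hnd (by simp [h])
    by_contra hcon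
    push_neg at hcon
    -- build a coloring avoiding color j
    have hvalid : ∀ u v : V, H.Adj u v →
        (if Co u = j then i else Co u) ≠ (if Co v = j then i else Co v) := by
      intro u v hadj heq
      have hco := Co.valid hadj
      by_cases hu : Co u = j <;> by_cases hv : Co v = j <;>
        simp only [hu, hv, if_pos, if_neg, if_true, if_false] at heq
      · exact hco (hu.trans hv.symm)
      · -- Co u = j, Co v = i : edge with colors {i,j}
        have hmem : s(u, v) ∈ H.edgeFinset := by
          rw [mem_edgeFinset, mem_edgeSet]; exact hadj
        have := hcon _ hmem
        apply this
        rw [Sym2.map_pair_eq, hu, ← heq, Sym2.eq_swap]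
      · have hmem : s(u, v) ∈ H.edgeFinset := by
          rw [mem_edgeFinset, mem_edgeSet]; exact hadj
        have := hcon _ hmem
        apply this
        rw [Sym2.map_pair_eq, hv, heq]
      · exact hco heq
    let f : V → {x : Fin c // x ≠ j} := fun v =>
      if h : Co v = j then ⟨i, hij⟩ else ⟨Co v, h⟩
    have fCol : H.Coloring {x : Fin c // x ≠ j} := by
      refine Coloring.mk f ?_
      intro u v hadj heq
      apply hvalid u v hadj
      have := congrArg Subtype.val heq
      simpa only [f, apply_dite Subtype.val, dite_eq_ite] using this
    have hcard : Fintype.card {x : Fin c // x ≠ j} = c - 1 := by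
      simp only [Ne, Fintype.card_subtype_compl, Fintype.card_subtype_eq, Fintype.card_fin]
    have hcol : H.Colorable (c - 1) := hcard ▸ fCol.colorable
    have := hcol.chromaticNumber_le
    rw [hχ, Nat.cast_le] at this
    omega
  -- injective map from nondiagonal pairs to edges
  have hinj : ∃ g : {z : Sym2 (Fin c) // ¬ z.IsDiag} → {e // e ∈ H.edgeFinset},
      Function.Injective g := by
    have hch : ∀ z : {z : Sym2 (Fin c) // ¬ z.IsDiag},
        ∃ e, e ∈ H.edgeFinset ∧ e.map Co = z.1 := by
      intro z
      obtain ⟨e, he, hm⟩ := claim z.1 z.2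
      exact ⟨e, he, hm⟩
    choose g hg1 hg2 using hch
    refine ⟨fun z => ⟨g z, hg1 z⟩, ?_⟩
    intro z1 z2 h
    have : g z1 = g z2 := congrArg Subtype.val h
    apply Subtype.ext
    rw [← hg2 z1, ← hg2 z2, this]
  obtain ⟨g, hg⟩ := hinj
  have := Fintype.card_le_of_injective g hg
  rwa [Sym2.card_subtype_not_diag, Fintype.card_fin, Fintype.card_coe] at this

lemma mono_card_ge {V : Type*} [Fintype V] [Nonempty V] (G : SimpleGraph V) (k b : ℕ)
    (hk : G.chromaticNumber = k) (σ : V → Fin b) (hbk : (b : ℝ) ≤ k) :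
    ((k : ℝ) - b) ^ 2 / (2 * b) ≤
      ((G.edgeFinset.filter (fun e => (e.map σ).IsDiag)).card : ℝ) := by
  classical
  have hb1 : 1 ≤ b := by
    have : Nonempty (Fin b) := ⟨σ (Classical.arbitrary V)⟩
    exact Fin.pos_iff_nonempty.2 this
  set Mi : Fin b → Finset (Sym2 V) :=
    fun i => G.edgeFinset.filter (fun e => e.map σ = Sym2.diag i) with hMi
  set Hi : Fin b → SimpleGraph V := fun i => SimpleGraph.fromEdgeSet ↑(Mi i) with hHi
  set c : Fin b → ℕ := fun i => (Hi i).chromaticNumber.toNat with hcdef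
  set M := G.edgeFinset.filter (fun e => (e.map σ).IsDiag) with hM
  -- (3) fiberwise count
  have h3 : M = Finset.univ.biUnion Mi := by
    ext e
    simp only [hM, hMi, mem_filter, Finset.mem_biUnion, Finset.mem_univ, true_and]
    constructor
    · rintro ⟨he, hd⟩
      obtain ⟨i, hi⟩ := (⟨_, Sym2.diag_diagElem hd⟩ : ∃ i, Sym2.diag i = Sym2.map σ e)
      exact ⟨i, he, hi.symm⟩
    · rintro ⟨i, he, hd⟩
      exact ⟨he, hd ▸ Sym2.diag_isDiag i⟩
  have h3c : M.card = ∑ i, (Mi i).card := by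
    rw [h3]
    apply Finset.card_biUnion
    intro i _ j _ hij
    refine Finset.disjoint_left.2 fun e hei hej => hij ?_
    simp only [hMi, mem_filter] at hei hej
    exact Sym2.diag_injective (hei.2.symm.trans hej.2)
  -- (2)
  have h2 : ∀ i, (c i).choose 2 ≤ (Mi i).card := by
    intro i
    refine (choose_two_le_card_edges (Hi i)).trans (Finset.card_le_card ?_)
    intro e he
    have he' : e ∈ (Hi i).edgeSet := Set.mem_toFinset.mp he
    rw [hHi] at he'
    rw [SimpleGraph.edgeSet_fromEdgeSet] at he'
    exact he'.1
  -- (4)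
  have h4 : ∀ i, 1 ≤ c i := by
    intro i
    by_contra h
    have hc0 : c i = 0 := by omega
    have := (Hi i).colorable_chromaticNumber_of_fintype
    rw [show (Hi i).chromaticNumber.toNat = c i from rfl, hc0] at this
    exact (not_isEmpty_of_nonempty V) ((Hi i).isEmpty_of_colorable_zero this)
  -- (1)
  have h1 : k ≤ ∑ i, c i := by
    have hcolor : ∀ i, (Hi i).Colorable (c i) := fun i =>
      (Hi i).colorable_chromaticNumber_of_fintype
    have Co : ∀ i, (Hi i).Coloring (Fin (c i)) := fun i => (hcolor i).some
    have C : G.Coloring (Σ i : Fin b, Fin (c i)) := by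
      refine Coloring.mk (fun v => ⟨σ v, Co (σ v) v⟩) ?_
      intro u v hadj heq
      have hfst : σ u = σ v := congrArg Sigma.fst heq
      have hadj' : (Hi (σ v)).Adj u v := by
        rw [hHi, SimpleGraph.fromEdgeSet_adj]
        refine ⟨?_, G.ne_of_adj hadj⟩
        rw [Finset.mem_coe, hMi, mem_filter]
        refine ⟨mem_edgeFinset.2 hadj, ?_⟩
        rw [Sym2.map_pair_eq, hfst]
        rfl
      have h2' := (Sigma.mk.inj_iff.mp heq).2
      rw [hfst] at h2'
      exact (Co (σ v)).valid hadj' (eq_of_heq h2')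
    have := C.colorable
    rw [Fintype.card_sigma] at this
    simp only [Fintype.card_fin] at this
    have hle := this.chromaticNumber_le
    rw [hk, Nat.cast_le] at hle
    exact hle
  -- real computation
  have hbpos : (0 : ℝ) < 2 * b := by
    have : (1:ℝ) ≤ (b:ℝ) := by exact_mod_cast hb1
    linarith
  rw [div_le_iff₀ hbpos]
  have step1 : ((k:ℝ) - b) ≤ ∑ i, ((c i : ℝ) - 1) := by
    have : (∑ i : Fin b, ((c i : ℝ) - 1)) = (∑ i, (c i : ℝ)) - b := by
      rw [Finset.sum_sub_distrib, Finset.sum_const, Finset.card_univ, Fintype.card_fin,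
        nsmul_eq_mul, mul_one]
    rw [this]
    have : (k : ℝ) ≤ ∑ i, (c i : ℝ) := by exact_mod_cast (by exact_mod_cast h1 : (k:ℝ) ≤ ((∑ i, c i : ℕ) : ℝ))
    linarith
  have step5 : ∀ i, ((c i : ℝ) - 1) ^ 2 ≤ 2 * ((Mi i).card : ℝ) := by
    intro i
    have hnat : (c i - 1) ^ 2 ≤ 2 * (Mi i).card := by
      have he : 2 * ((c i).choose 2) = c i * (c i - 1) := by
        rw [Nat.choose_two_right]
        exact Nat.two_mul_div_two_of_even (Nat.even_mul_pred_self (c i))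
      calc (c i - 1) ^ 2 = (c i - 1) * (c i - 1) := sq (c i - 1) ▸ rfl
        _ ≤ c i * (c i - 1) := Nat.mul_le_mul_right _ (Nat.sub_le _ _)
        _ = 2 * ((c i).choose 2) := he.symm
        _ ≤ 2 * (Mi i).card := Nat.mul_le_mul_left _ (h2 i)
    have hcast : ((c i : ℝ) - 1) = ((c i - 1 : ℕ) : ℝ) := by
      rw [Nat.cast_sub (h4 i), Nat.cast_one]
    rw [hcast]
    exact_mod_cast hnat
  calc ((k:ℝ) - b) ^ 2 ≤ (∑ i, ((c i : ℝ) - 1)) ^ 2 := by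
        apply pow_le_pow_left₀ (by linarith) step1
    _ ≤ (b : ℝ) * ∑ i, ((c i : ℝ) - 1) ^ 2 := by
        have := sq_sum_le_card_mul_sum_sq (s := (Finset.univ : Finset (Fin b)))
          (f := fun i => (c i : ℝ) - 1)
        simpa using this
    _ ≤ (b : ℝ) * ∑ i, (2 * ((Mi i).card : ℝ)) := by
        apply mul_le_mul_of_nonneg_left (Finset.sum_le_sum fun i _ => step5 i)
        positivity
    _ = (M.card : ℝ) * (2 * b) := by
        rw [← Finset.mul_sum, h3c]
        push_cast
        ring

lemma key_ineq (k n b : ℕ) (C L d : ℝ) (hC : 1 ≤ C)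
    (hdK : d * (4 * C * L) = k) (hd1 : 1 ≤ d) (hb : (b : ℝ) ≤ d) (hb1 : 1 ≤ b)
    (hn : (n : ℝ) ≤ C * k) (hlb : Real.logb 2 b ≤ L) (hk12 : 12 ≤ (k : ℝ))
    (hCL2 : 2 ≤ C * L) :
    (n : ℝ) * Real.logb 2 b + 1 ≤ ((k : ℝ) - b) ^ 2 / (2 * b) := by
  have hb0 : (0:ℝ) < b := by exact_mod_cast hb1
  have hd0 : (0:ℝ) < d := by linarith
  have h8 : 8 * d ≤ (k:ℝ) := by nlinarith [mul_nonneg hd0.le (sub_nonneg.2 hCL2)]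
  have hKb : 7 * (k:ℝ) / 8 ≤ (k:ℝ) - b := by linarith
  have hlb0 : (0:ℝ) ≤ Real.logb 2 b := Real.logb_nonneg one_lt_two (by exact_mod_cast hb1)
  have hL0 : (0:ℝ) ≤ L := hlb0.trans hlb
  have hn0 : (0:ℝ) ≤ (n:ℝ) := Nat.cast_nonneg n
  have hCk0 : (0:ℝ) ≤ C * k := by nlinarith
  have lhs_le : (n:ℝ) * Real.logb 2 b ≤ C * (k:ℝ) * L := by
    calc (n:ℝ) * Real.logb 2 b ≤ (C * k) * L := by
          apply mul_le_mul hn hlb hlb0 hCk0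
      _ = C * (k:ℝ) * L := by ring
  have hdiv : (7 * (k:ℝ) / 8) ^ 2 / (2 * d) ≤ ((k:ℝ) - b) ^ 2 / (2 * b) := by
    apply div_le_div₀ (by positivity) ?_ (by linarith) (by linarith)
    apply pow_le_pow_left₀ (by linarith) hKb
  have hmain : C * (k:ℝ) * L + 1 ≤ (7 * (k:ℝ) / 8) ^ 2 / (2 * d) := by
    rw [le_div_iff₀ (by linarith : (0:ℝ) < 2 * d)]
    have hmul : d * (4 * C * L) * k = (k:ℝ) * k := by rw [hdK]
    nlinarith [hmul, h8, hk12]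
  linarith


set_option maxHeartbeats 1000000 in
theorem stmt_5 {V : Type*} [Fintype V] (G : SimpleGraph V) (n k : ℕ) (C : ℝ)
    (hn : Fintype.card V = n) (hk : G.chromaticNumber = k)
    (hC : 1 ≤ C) (hnk : (n : ℝ) ≤ C * k)
    (hbig : 1 ≤ (k : ℝ) / (4 * C * Real.logb 2 k)) :
    (k : ℝ) / (8 * C * Real.logb 2 k) ≤
      exHalf G (fun H => H.chromaticNumber.toNat) := by
  classical
  have hk2 : 2 ≤ k := by
    by_contra h
    push_neg at h
    interval_cases k
    · norm_num [Real.logb_zero] at hbig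
    · norm_num [Real.logb_one] at hbig
  set L := Real.logb 2 (k : ℝ) with hLdef
  have h2k : (2:ℝ) ≤ (k:ℝ) := by exact_mod_cast hk2
  have hL1 : 1 ≤ L := by
    have h := Real.logb_le_logb_of_le (b := 2) one_lt_two (by norm_num) h2k
    rwa [Real.logb_self_eq_one (by norm_num)] at h
  have hCL0 : (0:ℝ) < 4 * C * L := by nlinarith
  have h4CLk : 4 * C * L ≤ (k:ℝ) := (one_le_div hCL0).mp hbig
  have hk4 : (4:ℝ) ≤ (k:ℝ) := by nlinarith
  have hL2 : 2 ≤ L := by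
    have h24 : Real.logb 2 4 = 2 := by
      rw [show (4:ℝ) = 2 ^ (2:ℕ) by norm_num, Real.logb_pow,
        Real.logb_self_eq_one (by norm_num)]
      norm_num
    have h := Real.logb_le_logb_of_le (b := 2) one_lt_two (by norm_num) hk4
    rwa [h24] at h
  have hk8 : (8:ℝ) ≤ (k:ℝ) := by nlinarith
  have hL3 : 3 ≤ L := by
    have h28 : Real.logb 2 8 = 3 := by
      rw [show (8:ℝ) = 2 ^ (3:ℕ) by norm_num, Real.logb_pow,
        Real.logb_self_eq_one (by norm_num)]
      norm_num
    have h := Real.logb_le_logb_of_le (b := 2) one_lt_two (by norm_num) hk8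
    rwa [h28] at h
  have hk12 : (12:ℝ) ≤ (k:ℝ) := by nlinarith
  haveI hVne : Nonempty V := by
    by_contra h
    rw [not_nonempty_iff] at h
    rw [G.chromaticNumber_eq_zero_of_isEmpty] at hk
    have : k = 0 := by exact_mod_cast hk.symm
    omega
  have hn1 : 1 ≤ n := hn ▸ Fintype.card_pos
  set d : ℝ := (k:ℝ) / (4 * C * L) with hddef
  have hd1 : 1 ≤ d := hbig
  have hdK : d * (4 * C * L) = (k:ℝ) := div_mul_cancel₀ _ (ne_of_gt hCL0)
  set b : ℕ := ⌈d⌉₊ - 1 with hbdef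
  have hceil1 : 1 ≤ ⌈d⌉₊ := Nat.one_le_ceil_iff.2 (by linarith)
  have hb_real : (b:ℝ) = (⌈d⌉₊:ℝ) - 1 := by
    rw [hbdef, Nat.cast_sub hceil1, Nat.cast_one]
  have hb_le_d : (b:ℝ) ≤ d := by
    have := Nat.ceil_lt_add_one (by linarith : (0:ℝ) ≤ d)
    linarith [hb_real]
  have hb1_eq : (b:ℝ) + 1 = (⌈d⌉₊:ℝ) := by linarith [hb_real]
  have hd_le_b1 : d ≤ (b:ℝ) + 1 := by rw [hb1_eq]; exact Nat.le_ceil d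
  have hCL2 : 2 ≤ C * L := by nlinarith
  have hd8 : 8 * d ≤ (k:ℝ) := by nlinarith [hdK]
  have hb_k : (b:ℝ) ≤ (k:ℝ) := by linarith
  set m := G.edgeFinset.card with hm
  set P := G.edgeFinset.powerset with hP
  set Bad := P.filter
    (fun S : Finset (Sym2 V) =>
      (SimpleGraph.fromEdgeSet (↑S : Set (Sym2 V))).chromaticNumber.toNat ≤ b) with hBadDef
  set Good := P.filter
    (fun S : Finset (Sym2 V) =>
      ¬ ((SimpleGraph.fromEdgeSet (↑S : Set (Sym2 V))).chromaticNumber.toNat ≤ b))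
    with hGoodDef
  have hsplit : Bad.card + Good.card = 2 ^ m := by
    rw [hBadDef, hGoodDef, Finset.card_filter_add_card_filter_not, hP,
      Finset.card_powerset, hm]
  set μ : ℝ := ((k:ℝ) - b) ^ 2 / (2 * b) with hμdef
  have hμ0 : 0 ≤ μ := by positivity
  have hBadBound : (Bad.card : ℝ) ≤ (2:ℝ) ^ m / 2 := by
    have hsub : Bad ⊆ (Finset.univ : Finset (V → Fin b)).biUnion (fun σ =>
        P.filter (fun S =>
          S ∩ (G.edgeFinset.filter (fun e => (e.map σ).IsDiag)) = ∅)) := by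
      intro S hS
      rw [hBadDef, mem_filter] at hS
      have hcol : (SimpleGraph.fromEdgeSet (S : Set (Sym2 V))).Colorable b :=
        ((SimpleGraph.fromEdgeSet (S : Set (Sym2 V))).colorable_chromaticNumber_of_fintype).mono
          hS.2
      obtain ⟨Co⟩ := hcol
      refine Finset.mem_biUnion.2 ⟨⇑Co, Finset.mem_univ _, ?_⟩
      rw [mem_filter]
      refine ⟨hS.1, ?_⟩
      have hSsub : S ⊆ G.edgeFinset := Finset.mem_powerset.mp hS.1
      have key : ∀ u v : V, s(u, v) ∈ S → ¬ (Sym2.map (⇑Co) s(u, v)).IsDiag := by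
        intro u v hmem hdiag
        have hne : u ≠ v := by
          intro h
          have hmemE : s(u, v) ∈ G.edgeFinset := hSsub hmem
          exact (G.not_isDiag_of_mem_edgeSet (mem_edgeFinset.mp hmemE)) (by simp [h])
        have hadj : (SimpleGraph.fromEdgeSet (S : Set (Sym2 V))).Adj u v := by
          rw [SimpleGraph.fromEdgeSet_adj]
          exact ⟨hmem, hne⟩
        rw [Sym2.map_pair_eq, Sym2.mk_isDiag_iff] at hdiag
        exact Co.valid hadj hdiag
      rw [Finset.eq_empty_iff_forall_notMem]
      intro e he
      rw [Finset.mem_inter, mem_filter] at he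
      exact Sym2.ind (f := fun e =>
          e ∈ S → (Sym2.map (⇑Co) e).IsDiag → False)
        (fun u v hmem hdiag => key u v hmem hdiag) e he.1 he.2.2
    have hcard1 : (Bad.card : ℝ) ≤ ∑ σ : V → Fin b,
        (((P.filter (fun S =>
          S ∩ (G.edgeFinset.filter (fun e => (e.map σ).IsDiag)) = ∅)).card : ℝ)) := by
      have h := (Finset.card_le_card hsub).trans Finset.card_biUnion_le
      exact_mod_cast h
    have hfilter : ∀ σ : V → Fin b,
        (P.filter (fun S =>
          S ∩ (G.edgeFinset.filter (fun e => (e.map σ).IsDiag)) = ∅)).card =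
        2 ^ (m - (G.edgeFinset.filter (fun e => (e.map σ).IsDiag)).card) := by
      intro σ
      have heq : P.filter (fun S =>
          S ∩ (G.edgeFinset.filter (fun e => (e.map σ).IsDiag)) = ∅) =
          (G.edgeFinset \ (G.edgeFinset.filter (fun e => (e.map σ).IsDiag))).powerset := by
        ext S
        simp only [hP, mem_filter, Finset.mem_powerset, Finset.subset_sdiff,
          ← Finset.disjoint_iff_inter_eq_empty]
      rw [heq, Finset.card_powerset, Finset.card_sdiff_of_subset (Finset.filter_subset _ _)]
    have hμle : ∀ σ : V → Fin b,
        μ ≤ ((G.edgeFinset.filter (fun e => (e.map σ).IsDiag)).card : ℝ) := fun σ =>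
      mono_card_ge G k b hk σ hb_k
    have hperσ : ∀ σ : V → Fin b,
        ((2:ℝ)) ^ (m - (G.edgeFinset.filter (fun e => (e.map σ).IsDiag)).card) ≤
          (2:ℝ) ^ m * (2:ℝ) ^ (-μ) := by
      intro σ
      set c := (G.edgeFinset.filter (fun e => (e.map σ).IsDiag)).card with hcdef
      have hcm : c ≤ m := by
        rw [hcdef, hm]; exact Finset.card_le_card (Finset.filter_subset _ _)
      rw [pow_sub₀ (2:ℝ) (by norm_num) hcm]
      apply mul_le_mul_of_nonneg_left ?_ (by positivity)
      rw [← Real.rpow_natCast (2:ℝ) c, ← Real.rpow_neg (by norm_num)]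
      apply (Real.rpow_le_rpow_left_iff (by norm_num : (1:ℝ) < 2)).2
      have h := hμle σ
      rw [← hcdef] at h
      linarith
    calc (Bad.card : ℝ) ≤ ∑ σ : V → Fin b,
          (((P.filter (fun S =>
            S ∩ (G.edgeFinset.filter (fun e => (e.map σ).IsDiag)) = ∅)).card : ℝ)) := hcard1
      _ ≤ ∑ _σ : V → Fin b, (2:ℝ) ^ m * (2:ℝ) ^ (-μ) := by
          apply Finset.sum_le_sum
          intro σ _
          rw [hfilter σ]
          push_cast
          exact_mod_cast hperσ σ
      _ = ((b:ℝ)) ^ n * ((2:ℝ) ^ m * (2:ℝ) ^ (-μ)) := by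
          rw [Finset.sum_const, Finset.card_univ, Fintype.card_fun, Fintype.card_fin, hn, nsmul_eq_mul]
          push_cast
          ring
      _ = (2:ℝ) ^ m * (((b:ℝ)) ^ n * (2:ℝ) ^ (-μ)) := by ring
      _ ≤ (2:ℝ) ^ m * (1 / 2) := by
          apply mul_le_mul_of_nonneg_left ?_ (by positivity)
          rcases Nat.eq_zero_or_pos b with hb0 | hb1
          · rw [hb0]
            have hz : ((0:ℕ):ℝ) ^ n = 0 := by
              rw [Nat.cast_zero, zero_pow (by omega)]
            rw [hz, zero_mul]
            norm_num
          · have hbR : (1:ℝ) ≤ (b:ℝ) := by exact_mod_cast hb1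
            have hlb : Real.logb 2 (b:ℝ) ≤ L := by
              have h := Real.logb_le_logb_of_le (b := 2) one_lt_two (by linarith) (by linarith :
                (b:ℝ) ≤ (k:ℝ))
              rw [hLdef]
              exact h
            have hkey : (n:ℝ) * Real.logb 2 (b:ℝ) + 1 ≤ μ :=
              key_ineq k n b C L d hC hdK hd1 hb_le_d hb1 hnk hlb hk12 hCL2
            have hbpow : ((b:ℝ)) ^ n = (2:ℝ) ^ ((Real.logb 2 (b:ℝ)) * n) := by
              rw [Real.rpow_mul (by norm_num : (0:ℝ) ≤ 2), Real.rpow_natCast,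
                Real.rpow_logb (by linarith) (by norm_num) (by linarith)]
            rw [hbpow, ← Real.rpow_add (by norm_num : (0:ℝ) < 2)]
            have hexp : Real.logb 2 (b:ℝ) * n + (-μ) ≤ -1 := by nlinarith
            calc (2:ℝ) ^ (Real.logb 2 (b:ℝ) * n + (-μ)) ≤ (2:ℝ) ^ (-1 : ℝ) :=
                  (Real.rpow_le_rpow_left_iff (by norm_num)).2 hexp
              _ = 1 / 2 := by
                  rw [Real.rpow_neg_one]; norm_num
      _ = (2:ℝ) ^ m / 2 := by ring
  have hGoodBound : (2:ℝ) ^ m / 2 ≤ (Good.card : ℝ) := by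
    have hcast : ((Bad.card : ℝ)) + (Good.card : ℝ) = (2:ℝ) ^ m := by
      exact_mod_cast congrArg (Nat.cast : ℕ → ℝ) hsplit
    linarith
  have hsum_ge : ((b:ℝ) + 1) * (Good.card : ℝ) ≤
      ∑ S ∈ P, (((SimpleGraph.fromEdgeSet (S : Set (Sym2 V))).chromaticNumber.toNat : ℕ) : ℝ) := by
    calc ((b:ℝ) + 1) * (Good.card : ℝ)
        = ∑ _S ∈ Good, ((b:ℝ) + 1) := by
          rw [Finset.sum_const, nsmul_eq_mul]; ring
      _ ≤ ∑ S ∈ Good,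
          (((SimpleGraph.fromEdgeSet (S : Set (Sym2 V))).chromaticNumber.toNat : ℕ) : ℝ) := by
          apply Finset.sum_le_sum
          intro S hS
          rw [hGoodDef, mem_filter] at hS
          have hb1S : b + 1 ≤
              (SimpleGraph.fromEdgeSet (S : Set (Sym2 V))).chromaticNumber.toNat := by
            omega
          exact_mod_cast hb1S
      _ ≤ ∑ S ∈ P,
          (((SimpleGraph.fromEdgeSet (S : Set (Sym2 V))).chromaticNumber.toNat : ℕ) : ℝ) := by
          apply Finset.sum_le_sum_of_subset_of_nonneg (Finset.filter_subset _ _)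
          intro S _ _
          positivity
  have hfinal : d / 2 ≤ exHalf G (fun H => H.chromaticNumber.toNat) := by
    have h2m : (0:ℝ) < (2:ℝ) ^ m := by positivity
    have hsum : d * ((2:ℝ) ^ m / 2) ≤
        ∑ S ∈ P, (((SimpleGraph.fromEdgeSet (S : Set (Sym2 V))).chromaticNumber.toNat : ℕ) : ℝ) := by
      calc d * ((2:ℝ) ^ m / 2) ≤ ((b:ℝ) + 1) * (Good.card : ℝ) := by
            apply mul_le_mul hd_le_b1 hGoodBound (by positivity) (by linarith)
        _ ≤ _ := hsum_ge
    show d / 2 ≤ (∑ S ∈ G.edgeFinset.powerset,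
        (((SimpleGraph.fromEdgeSet (S : Set (Sym2 V))).chromaticNumber.toNat : ℕ) : ℝ)) /
        2 ^ G.edgeFinset.card
    rw [← hP, ← hm, le_div_iff₀ h2m]
    calc d / 2 * 2 ^ m = d * ((2:ℝ) ^ m / 2) := by ring
      _ ≤ _ := hsum
  have hgoal : (k:ℝ) / (8 * C * L) = d / 2 := by
    rw [hddef, div_div, show (4:ℝ) * C * L * 2 = 8 * C * L by ring]
  rw [hgoal]
  exact hfinal
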